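/- The generalized coefficients satisfy the recurrence p·C(p+q, p; k) = (q+1)·C(p+q, p-1; k) − ((p+q)/(p+q-1))·(q−p+1)·C(p+q-1, p-1; k), for integers p ≥ 1, q ≥ 0 with p+q ≥ 2 and 1 ≤ k. -/
import Mathlib


/-- Generalized binomial coefficient `C(n,p;k) = (n/k) · Σ_{r≥0}
binom(p,r)·binom(n-p,r)·binom(n-r-1,k-r-1)`.  The sum is over `0 ≤ r ≤ k-1`,
which covers every nonzero term since `binom(n-r-1,k-r-1) = 0` for `r ≥ k`
(negative lower index in the usual convention). -/
def Cgen (n p k : ℕ) : ℚ :=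
  (n : ℚ) / (k : ℚ) *
    ∑ r ∈ Finset.range k,
      ((p.choose r : ℚ) * ((n - p).choose r : ℚ) * ((n - r - 1).choose (k - r - 1) : ℚ))

-- division forms of the binomial recurrences, over ℚ
lemma cdiv1 (n r : ℕ) : (n.choose (r+1) : ℚ) = n.choose r * ((n:ℚ) - r) / ((r:ℚ)+1) := by
  have hr : ((r:ℚ)+1) ≠ 0 := by positivity
  rw [eq_div_iff hr]
  rcases le_or_gt r n with h | h
  · have := Nat.choose_succ_right_eq n r
    have hc : ((n - r : ℕ) : ℚ) = (n:ℚ) - r := by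
      push_cast [Nat.cast_sub h]; ring
    calc (n.choose (r+1):ℚ) * ((r:ℚ)+1) = ((n.choose (r+1) * (r+1) : ℕ) : ℚ) := by push_cast; ring
      _ = ((n.choose r * (n - r) : ℕ) : ℚ) := by rw [this]
      _ = (n.choose r : ℚ) * ((n:ℚ) - r) := by push_cast [hc]; ring
  · have h1 : n.choose (r+1) = 0 := Nat.choose_eq_zero_of_lt (by omega)
    have h2 : n.choose r = 0 := Nat.choose_eq_zero_of_lt h
    simp [h1, h2]

lemma cdiv2 (n r : ℕ) : ((n+1).choose (r+1) : ℚ) = ((n:ℚ)+1) * n.choose r / ((r:ℚ)+1) := by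
  have hr : ((r:ℚ)+1) ≠ 0 := by positivity
  rw [eq_div_iff hr]
  have := Nat.add_one_mul_choose_eq n r
  calc ((n+1).choose (r+1):ℚ) * ((r:ℚ)+1) = (((n+1).choose (r+1) * (r+1) : ℕ) : ℚ) := by push_cast; ring
    _ = (((n+1) * n.choose r : ℕ) : ℚ) := by rw [← this]
    _ = ((n:ℚ)+1) * n.choose r := by push_cast; ring

-- the termwise key identity, at index r+1
lemma key_term (p q r : ℕ) (hp : 1 ≤ p) :
    ((q:ℚ)+1) * ((p-1).choose (r+1)) * ((q+1).choose (r+1))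
      - (p:ℚ) * (p.choose (r+1)) * (q.choose (r+1))
    = ((q:ℚ) - p + 1) *
        (((p-1).choose (r+1) : ℚ) * (q.choose (r+1)) - ((p-1).choose r : ℚ) * (q.choose r)) := by
  have hr : ((r:ℚ)+1) ≠ 0 := by positivity
  have hp1 : ((p-1:ℕ):ℚ) = (p:ℚ) - 1 := by
    push_cast [Nat.cast_sub hp]; ring
  have c1 : ((p-1).choose (r+1) : ℚ) = (p-1).choose r * ((p:ℚ) - 1 - r) / ((r:ℚ)+1) := by
    rw [cdiv1 (p-1) r, hp1]
  have c4 : (q.choose (r+1) : ℚ) = q.choose r * ((q:ℚ) - r) / ((r:ℚ)+1) := cdiv1 q r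
  have c2 : ((q+1).choose (r+1) : ℚ) = ((q:ℚ)+1) * q.choose r / ((r:ℚ)+1) := cdiv2 q r
  have c3 : (p.choose (r+1) : ℚ) = (p:ℚ) * (p-1).choose r / ((r:ℚ)+1) := by
    have hpp : p = (p-1) + 1 := by omega
    have h := cdiv2 (p-1) r
    rw [← hpp] at h
    rw [h, hp1]
    ring
  rw [c1, c2, c3, c4]
  field_simp
  ring


lemma step3 (p q m : ℕ) (hp : 1 ≤ p) (hpq : 2 ≤ p + q) :
    (∑ r ∈ Finset.range (m+1),
        (((p-1).choose r : ℚ) * (q.choose r : ℚ) * (((p+q)-r-1).choose (m-r) : ℚ)))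
      - (∑ r ∈ Finset.range m,
        (((p-1).choose r : ℚ) * (q.choose r : ℚ) * (((p+q)-(r+1)-1).choose (m-(r+1)) : ℚ)))
    = ∑ r ∈ Finset.range (m+1),
        (((p-1).choose r : ℚ) * (q.choose r : ℚ) * (((p+q)-r-2).choose (m-r) : ℚ)) := by
  rw [Finset.sum_range_succ (fun r => (((p-1).choose r : ℚ) * (q.choose r : ℚ) * (((p+q)-r-1).choose (m-r) : ℚ))) m,
      Finset.sum_range_succ (fun r => (((p-1).choose r : ℚ) * (q.choose r : ℚ) * (((p+q)-r-2).choose (m-r) : ℚ))) m]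
  have hterm : ∀ r ∈ Finset.range m,
      (((p-1).choose r : ℚ) * (q.choose r : ℚ) * (((p+q)-r-1).choose (m-r) : ℚ))
      = (((p-1).choose r : ℚ) * (q.choose r : ℚ) * (((p+q)-(r+1)-1).choose (m-(r+1)) : ℚ))
        + (((p-1).choose r : ℚ) * (q.choose r : ℚ) * (((p+q)-r-2).choose (m-r) : ℚ)) := by
    intro r hr
    rw [Finset.mem_range] at hr
    by_cases hc : p + q ≤ r + 1
    · rcases (show p - 1 < r ∨ q < r by omega) with h | h <;>
        simp [Nat.choose_eq_zero_of_lt h]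
    · have e1 : p + q - r - 1 = (p + q - r - 2) + 1 := by omega
      have e2 : m - r = (m - r - 1) + 1 := by omega
      have e3 : p + q - (r+1) - 1 = p + q - r - 2 := by omega
      have e4 : m - (r+1) = m - r - 1 := by omega
      rw [e1, e2, e3, e4, Nat.choose_succ_succ]
      push_cast
      ring
  rw [Finset.sum_congr rfl hterm, Finset.sum_add_distrib]
  simp only [Nat.sub_self, Nat.choose_zero_right, Nat.cast_one]
  ring

lemma key_sum (p q m : ℕ) (hp : 1 ≤ p) (hpq : 2 ≤ p + q) :
    ((q:ℚ)+1) * (∑ r ∈ Finset.range (m+1),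
        (((p-1).choose r : ℚ) * (((q+1)).choose r : ℚ) * (((p+q)-r-1).choose (m-r) : ℚ)))
      - (p:ℚ) * (∑ r ∈ Finset.range (m+1),
        ((p.choose r : ℚ) * (q.choose r : ℚ) * (((p+q)-r-1).choose (m-r) : ℚ)))
    = ((q:ℚ) - p + 1) * ∑ r ∈ Finset.range (m+1),
        (((p-1).choose r : ℚ) * (q.choose r : ℚ) * (((p+q)-r-2).choose (m-r) : ℚ)) := by
  have L : ((q:ℚ)+1) * (∑ r ∈ Finset.range (m+1),
        (((p-1).choose r : ℚ) * (((q+1)).choose r : ℚ) * (((p+q)-r-1).choose (m-r) : ℚ)))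
      - (p:ℚ) * (∑ r ∈ Finset.range (m+1),
        ((p.choose r : ℚ) * (q.choose r : ℚ) * (((p+q)-r-1).choose (m-r) : ℚ)))
      = ∑ r ∈ Finset.range (m+1),
          (((q:ℚ)+1) * ((p-1).choose r) * ((q+1).choose r)
            - (p:ℚ) * (p.choose r) * (q.choose r)) * (((p+q)-r-1).choose (m-r) : ℚ) := by
    rw [Finset.mul_sum, Finset.mul_sum, ← Finset.sum_sub_distrib]
    exact Finset.sum_congr rfl fun r _ => by ring
  rw [L, Finset.sum_range_succ']
  have Fterm : ∀ r ∈ Finset.range m,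
      (((q:ℚ)+1) * ((p-1).choose (r+1)) * ((q+1).choose (r+1))
        - (p:ℚ) * (p.choose (r+1)) * (q.choose (r+1))) * (((p+q)-(r+1)-1).choose (m-(r+1)) : ℚ)
      = ((q:ℚ) - p + 1) *
          ((((p-1).choose (r+1) : ℚ) * (q.choose (r+1)) * (((p+q)-(r+1)-1).choose (m-(r+1)) : ℚ)))
        - ((q:ℚ) - p + 1) *
          ((((p-1).choose r : ℚ) * (q.choose r) * (((p+q)-(r+1)-1).choose (m-(r+1)) : ℚ))) := fun r _ => by
    rw [show (((q:ℚ)+1) * ((p-1).choose (r+1)) * ((q+1).choose (r+1))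
        - (p:ℚ) * (p.choose (r+1)) * (q.choose (r+1))) = ((q:ℚ)+1) * ((p-1).choose (r+1)) * ((q+1).choose (r+1))
        - (p:ℚ) * (p.choose (r+1)) * (q.choose (r+1)) from rfl, key_term p q r hp]
    ring
  rw [Finset.sum_congr rfl Fterm, Finset.sum_sub_distrib, ← Finset.mul_sum, ← Finset.mul_sum]
  have peel := Finset.sum_range_succ' (fun r =>
    (((p-1).choose r : ℚ) * (q.choose r : ℚ) * (((p+q)-r-1).choose (m-r) : ℚ))) m
  simp only [Nat.choose_zero_right, Nat.cast_one, one_mul, mul_one] at peel ⊢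
  have s3 := step3 p q m hp hpq
  linear_combination ((q:ℚ) - p + 1) * s3 - ((q:ℚ) - p + 1) * peel

theorem Cgen_recurrence (p q k : ℕ) (hp : 1 ≤ p) (hpq : 2 ≤ p + q) (hk : 1 ≤ k) :
    (p : ℚ) * Cgen (p + q) p k =
      ((q : ℚ) + 1) * Cgen (p + q) (p - 1) k -
        (((p + q : ℕ) : ℚ) / (((p + q : ℕ) : ℚ) - 1)) * ((q : ℚ) - (p : ℚ) + 1) *
          Cgen (p + q - 1) (p - 1) k := by
  obtain ⟨m, rfl⟩ : ∃ m, k = m + 1 := ⟨k - 1, by omega⟩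
  unfold Cgen
  -- rewrite the three sums into the normal form used by key_sum
  have h1 : ∑ r ∈ Finset.range (m+1),
      ((p.choose r : ℚ) * (((p+q) - p).choose r : ℚ) * (((p+q) - r - 1).choose (m+1-r-1) : ℚ))
      = ∑ r ∈ Finset.range (m+1),
      ((p.choose r : ℚ) * (q.choose r : ℚ) * (((p+q)-r-1).choose (m-r) : ℚ)) :=
    Finset.sum_congr rfl fun r _ => by
      rw [show p+q-p = q from by omega, show m+1-r-1 = m-r from by omega]
  have h2 : ∑ r ∈ Finset.range (m+1),
      (((p-1).choose r : ℚ) * (((p+q) - (p-1)).choose r : ℚ) * (((p+q) - r - 1).choose (m+1-r-1) : ℚ))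
      = ∑ r ∈ Finset.range (m+1),
      (((p-1).choose r : ℚ) * ((q+1).choose r : ℚ) * (((p+q)-r-1).choose (m-r) : ℚ)) :=
    Finset.sum_congr rfl fun r _ => by
      rw [show p+q-(p-1) = q+1 from by omega, show m+1-r-1 = m-r from by omega]
  have h3 : ∑ r ∈ Finset.range (m+1),
      (((p-1).choose r : ℚ) * (((p+q-1) - (p-1)).choose r : ℚ) * (((p+q-1) - r - 1).choose (m+1-r-1) : ℚ))
      = ∑ r ∈ Finset.range (m+1),
      (((p-1).choose r : ℚ) * (q.choose r : ℚ) * (((p+q)-r-2).choose (m-r) : ℚ)) :=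
    Finset.sum_congr rfl fun r _ => by
      rw [show p+q-1-(p-1) = q from by omega, show m+1-r-1 = m-r from by omega,
        show p+q-1-r-1 = p+q-r-2 from by omega]
  rw [h1, h2, h3]
  have key := key_sum p q m hp hpq
  have hcast : ((p + q - 1 : ℕ) : ℚ) = ((p+q:ℕ) : ℚ) - 1 := by
    push_cast [Nat.cast_sub (show 1 ≤ p + q by omega)]; ring
  rw [hcast]
  have expand : ∀ S1 S2 S3 : ℚ,
      ((q:ℚ)+1)*S2 - (p:ℚ)*S1 = ((q:ℚ)-(p:ℚ)+1)*S3 →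
      (p:ℚ) * (((p+q:ℕ):ℚ)/(((m+1:ℕ)):ℚ) * S1) = ((q:ℚ)+1) * (((p+q:ℕ):ℚ)/(((m+1:ℕ)):ℚ) * S2) -
        (((p+q:ℕ):ℚ)/(((p+q:ℕ):ℚ)-1)) * ((q:ℚ)-(p:ℚ)+1) * ((((p+q:ℕ):ℚ)-1)/(((m+1:ℕ)):ℚ) * S3) := by
    intro S1 S2 S3 h
    have hN : ((p:ℚ)+(q:ℚ)) - 1 ≠ 0 := by
      have : (2:ℚ) ≤ (p:ℚ)+(q:ℚ) := by exact_mod_cast hpq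
      intro hc; nlinarith
    push_cast
    have e : (((p:ℚ)+q)/(((p:ℚ)+q)-1)) * ((q:ℚ)-(p:ℚ)+1) * (((((p:ℚ)+q))-1)/((m:ℚ)+1) * S3)
        = (((p:ℚ)+q)/((m:ℚ)+1)) * (((q:ℚ)-(p:ℚ)+1) * S3) := by
      have e2 : (((p:ℚ)+q)/(((p:ℚ)+q)-1)) * ((q:ℚ)-(p:ℚ)+1) * (((((p:ℚ)+q))-1)/((m:ℚ)+1) * S3)
          = (((p:ℚ)+q)/((m:ℚ)+1)) * (((q:ℚ)-(p:ℚ)+1) * S3) * (((((p:ℚ)+q))-1)/((((p:ℚ)+q))-1)) := by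
        ring
      rw [e2, div_self hN]; ring
    rw [e]
    linear_combination (-(((p:ℚ)+q)/((m:ℚ)+1))) * h
  exact expand _ _ _ key
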